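/- Let A be symmetric with eigendecomposition A = U Λ Uᵀ, eigenvalues λ₁,…,λ_n ordered so that |f(λ₁)| ≥ … ≥ |f(λ_n)|, and write U = [U_k, U_{n∖k}], Λ = diag(Λ_k, Λ_{n∖k}). Let Ω ∈ ℝ^{n×ℓ} with ℓ ≥ k, set Ω_k = U_kᵀΩ, Ω_{n∖k} = U_{n∖k}ᵀΩ, and assume rank(Ω_k) = k. Let p be a polynomial of degree ≤ s−1 with p(λ_i) ≠ 0 for i = 1,…,k, and let P̃ be the orthogonal projector onto range(p(A) Ω Ω_k† p(Λ_k)^{−1}). Then ‖(I − Û P̂) f(Λ)‖_F² ≤ ‖f(Λ_{n∖k})‖_F² + ‖p(Λ_{n∖k}) Ω_{n∖k} Ω_k†‖_F² · max_{1≤i≤k} |f(λ_i)/p(λ_i)|², where P̂ = Uᵀ P̃ U. -/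

import Mathlib

open Matrix BigOperators

/-- Frobenius norm of a real matrix. -/
noncomputable def frobNorm {m n : Type*} [Fintype m] [Fintype n] (M : Matrix m n ℝ) : ℝ :=
  Real.sqrt (∑ i, ∑ j, (M i j) ^ 2)

lemma psd_diag_nonneg {n : Type*} [Fintype n] [DecidableEq n] {M : Matrix n n ℝ}
    (h : M.PosSemidef) (i : n) : 0 ≤ M i i := by
  exact h.diag_nonneg

lemma real_conjT {a b : Type*} (M : Matrix a b ℝ) : Mᴴ = Mᵀ := by
  ext i j; simp [Matrix.conjTranspose_apply]

lemma frobNorm_sq {m n : Type*} [Fintype m] [Fintype n] (M : Matrix m n ℝ) :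
    frobNorm M ^ 2 = ∑ i, ∑ j, (M i j) ^ 2 := by
  apply Real.sq_sqrt
  exact Finset.sum_nonneg fun i _ => Finset.sum_nonneg fun j _ => sq_nonneg _

theorem stmt9 {k m ℓ : ℕ} [NeZero k] (hℓ : k ≤ ℓ)
    (f : ℝ → ℝ) (p : Polynomial ℝ) (s : ℕ) (hdeg : p.natDegree ≤ s - 1)
    (μ1 : Fin k → ℝ) (μ2 : Fin m → ℝ)
    (horder : ∀ i j, |f (μ2 j)| ≤ |f (μ1 i)|)
    (hp : ∀ i, p.eval (μ1 i) ≠ 0)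
    (Ωk : Matrix (Fin k) (Fin ℓ) ℝ) (Ω2 : Matrix (Fin m) (Fin ℓ) ℝ)
    (hrank : Ωk * (Ωkᵀ * (Ωk * Ωkᵀ)⁻¹) = 1) :
    let Ωdag : Matrix (Fin ℓ) (Fin k) ℝ := Ωkᵀ * (Ωk * Ωkᵀ)⁻¹
    let F : Matrix (Fin m) (Fin k) ℝ :=
      Matrix.diagonal (fun j => p.eval (μ2 j)) * Ω2 * Ωdag *
        (Matrix.diagonal (fun i => p.eval (μ1 i)))⁻¹
    let G : Matrix (Fin k) (Fin k) ℝ := (1 + Fᵀ * F)⁻¹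
    let Phat : Matrix (Fin k ⊕ Fin m) (Fin k ⊕ Fin m) ℝ :=
      Matrix.fromBlocks G (G * Fᵀ) (F * G) (F * G * Fᵀ)
    let fΛ : Matrix (Fin k ⊕ Fin m) (Fin k ⊕ Fin m) ℝ :=
      Matrix.diagonal (Sum.elim (fun i => f (μ1 i)) (fun j => f (μ2 j)))
    frobNorm ((1 - Phat) * fΛ) ^ 2
      ≤ (∑ j, (f (μ2 j)) ^ 2) +
        frobNorm (Matrix.diagonal (fun j => p.eval (μ2 j)) * Ω2 * Ωdag) ^ 2 *
          (⨆ i : Fin k, (f (μ1 i) / p.eval (μ1 i)) ^ 2) := by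
  intro Ωdag F G Phat fΛ
  set M2 : Matrix (Fin m) (Fin k) ℝ := Matrix.diagonal (fun j => p.eval (μ2 j)) * Ω2 * Ωdag
    with hM2def
  have hFdef : F = M2 * (Matrix.diagonal (fun i => p.eval (μ1 i)))⁻¹ := rfl
  set B : Matrix (Fin k) (Fin k) ℝ := Fᵀ * F with hBdef
  have hGdef : G = (1 + B)⁻¹ := rfl
  have hBpsd : B.PosSemidef := by
    have := Matrix.posSemidef_conjTranspose_mul_self F
    rwa [real_conjT] at this
  have hpd : (1 + B).PosDef := Matrix.PosDef.add_posSemidef Matrix.PosDef.one hBpsd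
  have hunit : IsUnit (1 + B).det := hpd.det_pos.ne'.isUnit
  have hGl : G * (1 + B) = 1 := by rw [hGdef]; exact Matrix.nonsing_inv_mul _ hunit
  have hGr : (1 + B) * G = 1 := by rw [hGdef]; exact Matrix.mul_nonsing_inv _ hunit
  have hGpsd : G.PosSemidef := by rw [hGdef]; exact hpd.inv.posSemidef
  have hGsym : Gᵀ = G := by rw [← real_conjT]; exact hGpsd.isHermitian
  have hBsym : Bᵀ = B := by rw [hBdef, Matrix.transpose_mul, Matrix.transpose_transpose]
  have hcomm : B * G = G * B := by
    calc B * G = (G * (1 + B)) * (B * G) := by rw [hGl, one_mul]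
    _ = G * (B * ((1 + B) * G)) := by noncomm_ring
    _ = G * B := by rw [hGr, mul_one]
  have hBG : 1 - G = B * G := by
    have h := hGr
    rw [add_mul, one_mul] at h
    linear_combination (norm := noncomm_ring) -h
  -- V = [I; F] factorization
  set V : Matrix (Fin k ⊕ Fin m) (Fin k) ℝ := Matrix.fromRows 1 F with hVdef
  have hVt : Vᵀ = Matrix.fromCols 1 Fᵀ := by
    rw [hVdef, Matrix.transpose_fromRows, Matrix.transpose_one]
  have hPhat : Phat = Matrix.fromBlocks G (G * Fᵀ) (F * G) (F * G * Fᵀ) := rfl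
  have hV : V * G * Vᵀ = Phat := by
    rw [hVt, hVdef, Matrix.fromRows_mul, Matrix.fromRows_mul_fromCols, hPhat]
    simp [Matrix.one_mul, Matrix.mul_one]
  have hVtV : Vᵀ * V = 1 + B := by
    rw [hVt, hVdef, Matrix.fromCols_mul_fromRows, one_mul, hBdef]
  have haux : Vᵀ * (V * (G * Vᵀ)) = Vᵀ := by
    rw [← Matrix.mul_assoc Vᵀ V, hVtV, ← Matrix.mul_assoc, hGr, Matrix.one_mul]
  have hPP : Phat * Phat = Phat := by
    rw [← hV]
    simp only [Matrix.mul_assoc]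
    rw [haux]
  have hPsym : Phatᵀ = Phat := by
    rw [← hV, Matrix.transpose_mul, Matrix.transpose_mul, Matrix.transpose_transpose, hGsym,
      Matrix.mul_assoc]
  set Q : Matrix (Fin k ⊕ Fin m) (Fin k ⊕ Fin m) ℝ := 1 - Phat with hQdef
  have hQsym : Qᵀ = Q := by rw [hQdef, Matrix.transpose_sub, Matrix.transpose_one, hPsym]
  have hQQ : Q * Q = Q := by
    have h : Q * Q = 1 - Phat - Phat + Phat * Phat := by rw [hQdef]; noncomm_ring
    rw [h, hPP, hQdef]; abel
  have key : ∀ j, (∑ i, Q i j ^ 2) = Q j j := by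
    intro j
    have h1 : (Qᵀ * Q) j j = ∑ i, Q i j ^ 2 := by
      simp [Matrix.mul_apply, Matrix.transpose_apply, sq]
    rw [← h1, hQsym, hQQ]
  -- positive semidefiniteness facts
  have hFGF : (F * G * Fᵀ).PosSemidef := by
    have := hGpsd.mul_mul_conjTranspose_same F
    rwa [real_conjT] at this
  have hBGB : (B * G * B).PosSemidef := by
    have := hGpsd.conjTranspose_mul_mul_same B
    rwa [real_conjT, hBsym] at this
  have hBGle : ∀ i, (B * G) i i ≤ B i i := by
    intro i
    have h0 : 0 ≤ (B * G * B) i i := psd_diag_nonneg hBGB i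
    have h1 : B * G * B = B - B * G := by
      rw [Matrix.mul_assoc, ← hcomm, ← hBG, Matrix.mul_sub, Matrix.mul_one, hBG]
    have h2 : (B - B * G) i i = B i i - (B * G) i i := by simp [Matrix.sub_apply]
    rw [h1, h2] at h0; linarith
  -- diagonal entries of Q
  have hQd1 : ∀ i, Q (Sum.inl i) (Sum.inl i) = (B * G) i i := by
    intro i
    have e1 : Q (Sum.inl i) (Sum.inl i) = (1 - G) i i := by
      simp [hQdef, hPhat, Matrix.sub_apply, Matrix.one_apply]
    rw [e1, hBG]
  have hQd2 : ∀ j, Q (Sum.inr j) (Sum.inr j) ≤ 1 := by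
    intro j
    have : Q (Sum.inr j) (Sum.inr j) = 1 - (F * G * Fᵀ) j j := by
      simp [hQdef, hPhat, Matrix.sub_apply, Matrix.one_apply]
    rw [this]
    have := psd_diag_nonneg hFGF j
    linarith
  -- sup facts
  set S : ℝ := ⨆ i : Fin k, (f (μ1 i) / p.eval (μ1 i)) ^ 2 with hSdef
  have hS : ∀ i, (f (μ1 i) / p.eval (μ1 i)) ^ 2 ≤ S := by
    intro i
    exact le_ciSup (f := fun i : Fin k => (f (μ1 i) / p.eval (μ1 i)) ^ 2)
      (Set.Finite.bddAbove (Set.finite_range _)) i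
  -- entries of F
  have hdiaginv : (Matrix.diagonal (fun i => p.eval (μ1 i)))⁻¹
      = Matrix.diagonal (fun i => (p.eval (μ1 i))⁻¹) := by
    apply Matrix.inv_eq_right_inv
    rw [Matrix.diagonal_mul_diagonal]
    convert Matrix.diagonal_one with i
    exact mul_inv_cancel₀ (hp i)
  have hF : ∀ j i, F j i = M2 j i * (p.eval (μ1 i))⁻¹ := by
    intro j i
    rw [hFdef, hdiaginv, Matrix.mul_diagonal]
  have hBii : ∀ i, B i i = ∑ j, F j i ^ 2 := by
    intro i
    simp [hBdef, Matrix.mul_apply, Matrix.transpose_apply, sq]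
  -- compute LHS
  set d : Fin k ⊕ Fin m → ℝ := Sum.elim (fun i => f (μ1 i)) (fun j => f (μ2 j)) with hddef
  have LHS : frobNorm (Q * fΛ) ^ 2 = ∑ j, d j ^ 2 * Q j j := by
    rw [frobNorm_sq]
    have : ∀ i j, (Q * fΛ) i j = Q i j * d j := by
      intro i j; rw [Matrix.mul_diagonal]
    calc (∑ i, ∑ j, ((Q * fΛ) i j) ^ 2) = ∑ i, ∑ j, Q i j ^ 2 * d j ^ 2 := by
          simp_rw [this, mul_pow]
    _ = ∑ j, ∑ i, Q i j ^ 2 * d j ^ 2 := Finset.sum_comm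
    _ = ∑ j, d j ^ 2 * Q j j := by
          refine Finset.sum_congr rfl fun j _ => ?_
          rw [← Finset.sum_mul, key, mul_comm]
  rw [LHS, Fintype.sum_sum_type]
  have hbot : (∑ j, d (Sum.inr j) ^ 2 * Q (Sum.inr j) (Sum.inr j)) ≤ ∑ j, (f (μ2 j)) ^ 2 := by
    refine Finset.sum_le_sum fun j _ => ?_
    have : d (Sum.inr j) = f (μ2 j) := rfl
    rw [this]
    calc f (μ2 j) ^ 2 * Q (Sum.inr j) (Sum.inr j) ≤ f (μ2 j) ^ 2 * 1 :=
      mul_le_mul_of_nonneg_left (hQd2 j) (sq_nonneg _)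
    _ = f (μ2 j) ^ 2 := mul_one _
  have htop : (∑ i, d (Sum.inl i) ^ 2 * Q (Sum.inl i) (Sum.inl i)) ≤ frobNorm M2 ^ 2 * S := by
    have step1 : (∑ i, d (Sum.inl i) ^ 2 * Q (Sum.inl i) (Sum.inl i))
        ≤ ∑ i, f (μ1 i) ^ 2 * B i i := by
      refine Finset.sum_le_sum fun i _ => ?_
      rw [hQd1 i]
      exact mul_le_mul_of_nonneg_left (hBGle i) (sq_nonneg _)
    have step2 : (∑ i, f (μ1 i) ^ 2 * B i i) ≤ (∑ j, ∑ i, M2 j i ^ 2) * S := by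
      calc (∑ i, f (μ1 i) ^ 2 * B i i) = ∑ i, ∑ j, f (μ1 i) ^ 2 * F j i ^ 2 := by
            simp_rw [hBii, Finset.mul_sum]
      _ = ∑ j, ∑ i, f (μ1 i) ^ 2 * F j i ^ 2 := Finset.sum_comm
      _ ≤ ∑ j, ∑ i, M2 j i ^ 2 * S := by
            refine Finset.sum_le_sum fun j _ => Finset.sum_le_sum fun i _ => ?_
            have e : f (μ1 i) ^ 2 * F j i ^ 2 = M2 j i ^ 2 * (f (μ1 i) / p.eval (μ1 i)) ^ 2 := by
              rw [hF j i]
              field_simp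
            rw [e]
            exact mul_le_mul_of_nonneg_left (hS i) (sq_nonneg _)
      _ = (∑ j, ∑ i, M2 j i ^ 2) * S := by rw [Finset.sum_mul]; simp_rw [Finset.sum_mul]
    rw [frobNorm_sq]
    exact le_trans step1 step2
  linarith
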